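/- Let n, m, H ≥ 1, set d = n + 1, let N be an integer with N ≥ d, let r : {1,…,m} × {1,…,H} → [0,∞) be given radii, and let μ be a Borel probability measure on the space of configurations ω : {1,…,m} × {1,…,H} → ℝⁿ. Define R_N = E_{(ω_1,…,ω_N) ∼ μ^N} [ E_{(σ_1,…,σ_N)} [ sup_{q : {1,…,H} → ℝⁿ} (1/N) ∑_{i=1}^N σ_i · max_{o,t} 1[‖q(t) − ω_i(o,t)‖ < r(o,t)] ] ], where σ_1, …, σ_N are i.i.d. uniform on {−1, +1} and independent of the ω_i. Then R_N ≤ m·H·√( d·log(e·N/d) / (2N) ), where e is Euler's number. -/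

import Mathlib

open MeasureTheory
open Finset

private lemma sgn_invol {N : ℕ} (f : (Fin N → Bool) → ℝ)
    (hf : ∀ σ, f (fun i => !(σ i)) = - f σ) :
    ∑ σ : Fin N → Bool, f σ = 0 := by
  have hinv : Function.Involutive (fun σ : Fin N → Bool => fun i => !(σ i)) := by
    intro σ; funext i; simp
  have h := Equiv.sum_comp (Function.Involutive.toPerm _ hinv) f
  have : ∑ σ : Fin N → Bool, f ((Function.Involutive.toPerm _ hinv) σ)
      = ∑ σ : Fin N → Bool, (- f σ) :=
    Finset.sum_congr rfl (fun σ _ => hf σ)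
  rw [this] at h
  simp only [Finset.sum_neg_distrib] at h
  linarith

set_option maxHeartbeats 1000000 in

private lemma massart_core {N : ℕ} (B : Finset (Fin N → ℝ)) (hB : B.Nonempty)
    (R : ℝ) (hR : 0 < R) (hnorm : ∀ b ∈ B, ∑ i, (b i)^2 ≤ R^2)
    (hcard : 2 ≤ B.card) :
    (∑ σ : Fin N → Bool, B.sup' hB (fun b => ∑ i, (if σ i then (1:ℝ) else -1) * b i)) / 2^N
      ≤ R * Real.sqrt (2 * Real.log B.card) := by
  set L : ℝ := Real.log B.card with hLdef
  have hL : 0 < L := Real.log_pos (by exact_mod_cast hcard)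
  set lam : ℝ := Real.sqrt (2 * L) / R with hlam
  have hsq : Real.sqrt (2 * L) ^ 2 = 2 * L := Real.sq_sqrt (by linarith)
  have hsqpos : 0 < Real.sqrt (2 * L) := Real.sqrt_pos.2 (by linarith)
  have hlampos : 0 < lam := div_pos hsqpos hR
  have hSpos : ∀ σ : Fin N → Bool,
      0 < ∑ b ∈ B, Real.exp (lam * ∑ i, (if σ i then (1:ℝ) else -1) * b i) :=
    fun σ => Finset.sum_pos (fun b _ => Real.exp_pos _) hB
  -- step 1: pointwise bound on sup'
  have step1 : ∀ σ : Fin N → Bool,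
      B.sup' hB (fun b => ∑ i, (if σ i then (1:ℝ) else -1) * b i)
      ≤ Real.log (∑ b ∈ B, Real.exp (lam * ∑ i, (if σ i then (1:ℝ) else -1) * b i)) / lam := by
    intro σ
    apply Finset.sup'_le
    intro b hb
    rw [le_div_iff₀ hlampos]
    have hsingle := Finset.single_le_sum
      (f := fun x : Fin N → ℝ => Real.exp (lam * ∑ i, (if σ i then (1:ℝ) else -1) * x i))
      (s := B) (fun x _ => (Real.exp_pos _).le) hb
    have h1 : Real.exp ((∑ i, (if σ i then (1:ℝ) else -1) * b i) * lam)
        ≤ Real.exp (Real.log (∑ b ∈ B, Real.exp (lam * ∑ i, (if σ i then (1:ℝ) else -1) * b i))) := by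
      rw [Real.exp_log (hSpos σ), mul_comm ((∑ i, (if σ i then (1:ℝ) else -1) * b i)) lam]
      exact hsingle
    exact Real.exp_le_exp.mp h1
  -- step 2: Jensen
  have card_fun : (Fintype.card (Fin N → Bool)) = 2^N := by
    simp [Fintype.card_fun]
  have step2 : ∑ σ : Fin N → Bool, (1/(2:ℝ)^N) *
        Real.log (∑ b ∈ B, Real.exp (lam * ∑ i, (if σ i then (1:ℝ) else -1) * b i))
      ≤ Real.log (∑ σ : Fin N → Bool, (1/(2:ℝ)^N) *
          ∑ b ∈ B, Real.exp (lam * ∑ i, (if σ i then (1:ℝ) else -1) * b i)) := by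
    have := (strictConcaveOn_log_Ioi.concaveOn).le_map_sum
      (t := (univ : Finset (Fin N → Bool))) (w := fun _ => 1/(2:ℝ)^N)
      (p := fun σ => ∑ b ∈ B, Real.exp (lam * ∑ i, (if σ i then (1:ℝ) else -1) * b i))
      (fun _ _ => by positivity)
      (by rw [Finset.sum_const, card_univ, card_fun, nsmul_eq_mul]; field_simp; norm_num)
      (fun σ _ => Set.mem_Ioi.2 (hSpos σ))
    simpa [smul_eq_mul] using this
  -- step 3: bound on the expectation
  have inner : ∀ b ∈ B, ∑ σ : Fin N → Bool,
      Real.exp (lam * ∑ i, (if σ i then (1:ℝ) else -1) * b i)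
      ≤ 2^N * Real.exp (lam^2 * R^2 / 2) := by
    intro b hb
    calc ∑ σ : Fin N → Bool, Real.exp (lam * ∑ i, (if σ i then (1:ℝ) else -1) * b i)
        = ∑ σ : Fin N → Bool, ∏ i, Real.exp (lam * ((if σ i then (1:ℝ) else -1) * b i)) := by
          apply Finset.sum_congr rfl
          intro σ _
          rw [← Real.exp_sum, Finset.mul_sum]
      _ = ∏ i, ∑ j : Bool, Real.exp (lam * ((if j then (1:ℝ) else -1) * b i)) := by
          rw [Finset.prod_univ_sum, Fintype.piFinset_univ]
      _ = ∏ i, (2 * Real.cosh (lam * b i)) := by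
          apply Finset.prod_congr rfl
          intro i _
          rw [Fintype.sum_bool, Real.cosh_eq, if_pos rfl, if_neg (by simp)]
          ring_nf
      _ ≤ ∏ i, (2 * Real.exp ((lam * b i)^2/2)) := by
          apply Finset.prod_le_prod
          · intro i _; positivity
          · intro i _
            have := Real.cosh_le_exp_half_sq (lam * b i)
            linarith
      _ = 2^N * Real.exp (∑ i, (lam * b i)^2/2) := by
          rw [Finset.prod_mul_distrib, Finset.prod_const, Real.exp_sum]
          simp [Finset.card_univ]
      _ ≤ 2^N * Real.exp (lam^2 * R^2 / 2) := by
          have h0 : ∑ i, (lam * b i)^2/2 = lam^2 * (∑ i, (b i)^2) / 2 := by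
            rw [Finset.mul_sum, Finset.sum_div]
            apply Finset.sum_congr rfl
            intro i _; ring
          have h1 : ∑ i, (lam * b i)^2/2 ≤ lam^2 * R^2/2 := by
            rw [h0]
            have := hnorm b hb
            nlinarith [sq_nonneg lam]
          have h2 : (0:ℝ) < 2^N := by positivity
          exact mul_le_mul_of_nonneg_left (Real.exp_le_exp.2 h1) h2.le
  have step3 : ∑ σ : Fin N → Bool, (1/(2:ℝ)^N) *
        ∑ b ∈ B, Real.exp (lam * ∑ i, (if σ i then (1:ℝ) else -1) * b i)
      ≤ (B.card : ℝ) * Real.exp (lam^2 * R^2 / 2) := by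
    rw [← Finset.mul_sum]
    have swap : (∑ σ : Fin N → Bool, ∑ b ∈ B,
          Real.exp (lam * ∑ i, (if σ i then (1:ℝ) else -1) * b i))
        = ∑ b ∈ B, ∑ σ : Fin N → Bool,
          Real.exp (lam * ∑ i, (if σ i then (1:ℝ) else -1) * b i) := Finset.sum_comm
    rw [swap]
    have hb2 : ∑ b ∈ B, (∑ σ : Fin N → Bool,
          Real.exp (lam * ∑ i, (if σ i then (1:ℝ) else -1) * b i))
        ≤ ∑ b ∈ B, (2:ℝ)^N * Real.exp (lam^2 * R^2 / 2) := Finset.sum_le_sum inner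
    rw [Finset.sum_const, nsmul_eq_mul] at hb2
    have h2 : (0:ℝ) < 2^N := by positivity
    calc (1/(2:ℝ)^N) * ∑ b ∈ B, (∑ σ : Fin N → Bool,
          Real.exp (lam * ∑ i, (if σ i then (1:ℝ) else -1) * b i))
        ≤ (1/(2:ℝ)^N) * ((B.card : ℝ) * ((2:ℝ)^N * Real.exp (lam^2 * R^2 / 2))) := by
          apply mul_le_mul_of_nonneg_left _ (by positivity)
          linarith
      _ = (B.card : ℝ) * Real.exp (lam^2 * R^2 / 2) := by field_simp
  -- assemble
  have hcard0 : (0:ℝ) < B.card := by positivity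
  have hlamsq : lam^2 * R^2 / 2 = L := by
    rw [hlam, div_pow, hsq]
    field_simp
  have final1 : Real.log (∑ σ : Fin N → Bool, (1/(2:ℝ)^N) *
        ∑ b ∈ B, Real.exp (lam * ∑ i, (if σ i then (1:ℝ) else -1) * b i))
      ≤ 2 * L := by
    have hpos : 0 < ∑ σ : Fin N → Bool, (1/(2:ℝ)^N) *
        ∑ b ∈ B, Real.exp (lam * ∑ i, (if σ i then (1:ℝ) else -1) * b i) := by
      apply Finset.sum_pos _ Finset.univ_nonempty
      intro σ _
      exact mul_pos (by positivity) (hSpos σ)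
    calc Real.log _ ≤ Real.log ((B.card : ℝ) * Real.exp (lam^2 * R^2 / 2)) :=
          Real.log_le_log hpos step3
      _ = L + (lam^2 * R^2/2) := by
          rw [Real.log_mul (ne_of_gt hcard0) (Real.exp_ne_zero _), Real.log_exp, hLdef]
      _ = 2 * L := by rw [hlamsq]; ring
  have LHS_le : (∑ σ : Fin N → Bool,
        B.sup' hB (fun b => ∑ i, (if σ i then (1:ℝ) else -1) * b i)) / 2^N
      ≤ 2 * L / lam := by
    rw [div_le_div_iff₀ (by positivity) hlampos]
    calc (∑ σ : Fin N → Bool,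
          B.sup' hB (fun b => ∑ i, (if σ i then (1:ℝ) else -1) * b i)) * lam
        ≤ (∑ σ : Fin N → Bool,
          Real.log (∑ b ∈ B, Real.exp (lam * ∑ i, (if σ i then (1:ℝ) else -1) * b i)) / lam) * lam := by
          apply mul_le_mul_of_nonneg_right _ hlampos.le
          exact Finset.sum_le_sum (fun σ _ => step1 σ)
      _ = ∑ σ : Fin N → Bool,
          Real.log (∑ b ∈ B, Real.exp (lam * ∑ i, (if σ i then (1:ℝ) else -1) * b i)) := by
          rw [← Finset.sum_div, div_mul_cancel₀ _ (ne_of_gt hlampos)]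
      _ = (2:ℝ)^N * ∑ σ : Fin N → Bool, (1/(2:ℝ)^N) *
          Real.log (∑ b ∈ B, Real.exp (lam * ∑ i, (if σ i then (1:ℝ) else -1) * b i)) := by
          rw [Finset.mul_sum]
          apply Finset.sum_congr rfl
          intro σ _
          field_simp
      _ ≤ (2:ℝ)^N * Real.log (∑ σ : Fin N → Bool, (1/(2:ℝ)^N) *
          ∑ b ∈ B, Real.exp (lam * ∑ i, (if σ i then (1:ℝ) else -1) * b i)) := by
          apply mul_le_mul_of_nonneg_left step2 (by positivity)
      _ ≤ (2:ℝ)^N * (2 * L) := by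
          apply mul_le_mul_of_nonneg_left final1 (by positivity)
      _ = 2 * L * 2^N := by ring
  calc (∑ σ : Fin N → Bool,
        B.sup' hB (fun b => ∑ i, (if σ i then (1:ℝ) else -1) * b i)) / 2^N
      ≤ 2 * L / lam := LHS_le
    _ = R * Real.sqrt (2 * L) := by
        rw [hlam, div_eq_iff (ne_of_gt hlampos)]
        rw [hlam]
        have h2 : Real.sqrt 2 ^ 2 = 2 := Real.sq_sqrt (by norm_num)
        have hLs : Real.sqrt L ^ 2 = L := Real.sq_sqrt hL.le
        field_simp
        linear_combination (-1 : ℝ) * hsq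
    _ = R * Real.sqrt (2 * Real.log B.card) := by rw [hLdef]

private lemma massart01 {N : ℕ} (hN : 0 < N) (A : Finset (Fin N → ℝ)) (hA : A.Nonempty)
    (h01 : ∀ a ∈ A, ∀ i, a i = 0 ∨ a i = 1) :
    (∑ σ : Fin N → Bool, A.sup' hA (fun a => ∑ i, (if σ i then (1:ℝ) else -1) * a i)) / 2^N
      ≤ Real.sqrt ((N : ℝ) * Real.log A.card / 2) := by
  by_cases hc : A.card ≤ 1
  · -- singleton case
    have hc1 : A.card = 1 := le_antisymm hc (Finset.card_pos.2 hA)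
    obtain ⟨a₀, ha₀⟩ := Finset.card_eq_one.mp hc1
    subst ha₀
    have hz : ∑ σ : Fin N → Bool,
        ({a₀} : Finset (Fin N → ℝ)).sup' hA (fun a => ∑ i, (if σ i then (1:ℝ) else -1) * a i)
        = 0 := by
      have : ∀ σ : Fin N → Bool,
          ({a₀} : Finset (Fin N → ℝ)).sup' hA (fun a => ∑ i, (if σ i then (1:ℝ) else -1) * a i)
          = ∑ i, (if σ i then (1:ℝ) else -1) * a₀ i := fun σ => by
        simp [Finset.sup'_singleton]
      rw [Finset.sum_congr rfl (fun σ _ => this σ)]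
      apply sgn_invol
      intro σ
      rw [← Finset.sum_neg_distrib]
      apply Finset.sum_congr rfl
      intro i _
      cases h : σ i <;> simp [h]
    rw [hz, zero_div]
    exact Real.sqrt_nonneg _
  · push_neg at hc
    have hc2 : 2 ≤ A.card := hc
    set B : Finset (Fin N → ℝ) := A.image (fun a => fun i => a i - 1/2) with hBdef
    have hB : B.Nonempty := hA.image _
    have hinj : Function.Injective (fun a : Fin N → ℝ => fun i => a i - 1/2) := by
      intro a a' h
      funext i
      have := congrFun h i
      simpa using this
    have hBcard : B.card = A.card := Finset.card_image_of_injective _ hinj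
    have hRpos : 0 < Real.sqrt N / 2 := by
      apply div_pos (Real.sqrt_pos.2 (by exact_mod_cast hN)) two_pos
    have hnorm : ∀ b ∈ B, ∑ i, (b i)^2 ≤ (Real.sqrt N / 2)^2 := by
      intro b hb
      obtain ⟨a, ha, rfl⟩ := Finset.mem_image.mp hb
      have : ∀ i : Fin N, (a i - 1/2)^2 = 1/4 := by
        intro i
        rcases h01 a ha i with h | h <;> rw [h] <;> norm_num
      rw [Finset.sum_congr rfl (fun i _ => this i)]
      rw [Finset.sum_const, Finset.card_univ, Fintype.card_fin, div_pow,
        Real.sq_sqrt (by positivity : (0:ℝ) ≤ (N:ℝ))]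
      exact le_of_eq (by ring)
    have hmain := massart_core B hB (Real.sqrt N / 2) hRpos hnorm (hBcard ▸ hc2)
    -- centering comparison
    have hcomp : ∀ σ : Fin N → Bool,
        A.sup' hA (fun a => ∑ i, (if σ i then (1:ℝ) else -1) * a i)
        ≤ B.sup' hB (fun b => ∑ i, (if σ i then (1:ℝ) else -1) * b i)
          + ∑ i, (if σ i then (1:ℝ) else -1) * (1/2) := by
      intro σ
      apply Finset.sup'_le
      intro a ha
      have hmem : (fun i => a i - 1/2) ∈ B := Finset.mem_image_of_mem _ ha
      have hle := Finset.le_sup' (f := fun b : Fin N → ℝ => ∑ i, (if σ i then (1:ℝ) else -1) * b i) hmem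
      have hsplit : ∑ i, (if σ i then (1:ℝ) else -1) * a i
          = (∑ i, (if σ i then (1:ℝ) else -1) * (a i - 1/2))
            + ∑ i, (if σ i then (1:ℝ) else -1) * (1/2) := by
        rw [← Finset.sum_add_distrib]
        apply Finset.sum_congr rfl
        intro i _
        ring
      rw [hsplit]
      exact add_le_add_left hle _
    have hzero : ∑ σ : Fin N → Bool, (∑ i, (if σ i then (1:ℝ) else -1) * (1/2 : ℝ)) = 0 := by
      apply sgn_invol
      intro σ
      rw [← Finset.sum_neg_distrib]
      apply Finset.sum_congr rfl
      intro i _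
      cases h : σ i <;> simp [h]
    have hsum : (∑ σ : Fin N → Bool,
          A.sup' hA (fun a => ∑ i, (if σ i then (1:ℝ) else -1) * a i))
        ≤ ∑ σ : Fin N → Bool,
          B.sup' hB (fun b => ∑ i, (if σ i then (1:ℝ) else -1) * b i) := by
      calc (∑ σ : Fin N → Bool, A.sup' hA (fun a => ∑ i, (if σ i then (1:ℝ) else -1) * a i))
          ≤ ∑ σ : Fin N → Bool,
            (B.sup' hB (fun b => ∑ i, (if σ i then (1:ℝ) else -1) * b i)
              + ∑ i, (if σ i then (1:ℝ) else -1) * (1/2)) :=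
            Finset.sum_le_sum (fun σ _ => hcomp σ)
        _ = (∑ σ : Fin N → Bool, B.sup' hB (fun b => ∑ i, (if σ i then (1:ℝ) else -1) * b i))
            + ∑ σ : Fin N → Bool, (∑ i, (if σ i then (1:ℝ) else -1) * (1/2 : ℝ)) :=
            Finset.sum_add_distrib
        _ = _ := by rw [hzero, add_zero]
    have h2N : (0:ℝ) < 2^N := by positivity
    calc (∑ σ : Fin N → Bool, A.sup' hA (fun a => ∑ i, (if σ i then (1:ℝ) else -1) * a i)) / 2^N
        ≤ (∑ σ : Fin N → Bool, B.sup' hB (fun b => ∑ i, (if σ i then (1:ℝ) else -1) * b i)) / 2^N :=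
          by gcongr
      _ ≤ Real.sqrt N / 2 * Real.sqrt (2 * Real.log B.card) := hmain
      _ = Real.sqrt ((N:ℝ) * Real.log A.card / 2) := by
          rw [hBcard]
          rw [div_mul_eq_mul_div, ← Real.sqrt_mul (by positivity : (0:ℝ) ≤ (N:ℝ))]
          have hlog : (0:ℝ) ≤ Real.log A.card := by
            apply Real.log_nonneg
            have : (1:ℕ) ≤ A.card := le_trans (by norm_num) hc2
            exact_mod_cast this
          have hX : (0:ℝ) ≤ (N:ℝ) * (2 * Real.log A.card) := by positivity
          rw [show ((N:ℝ) * Real.log A.card / 2) = ((N:ℝ) * (2 * Real.log A.card)) / 4 by ring]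
          rw [Real.sqrt_div hX, show Real.sqrt 4 = 2 by
            rw [show (4:ℝ) = 2^2 by norm_num, Real.sqrt_sq (by norm_num : (0:ℝ) ≤ 2)]]

private lemma balls_no_shatter {n N : ℕ} (x : Fin N → EuclideanSpace ℝ (Fin n)) (ρ : ℝ)
    (hρ : 0 ≤ ρ) (s : Finset (Fin N))
    (hs : ∀ t ⊆ s, ∃ c : EuclideanSpace ℝ (Fin n), ∀ i ∈ s, (i ∈ t ↔ ‖x i - c‖ < ρ)) :
    s.card ≤ n + 1 := by
  classical
  by_contra hcon
  push_neg at hcon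
  have hdim : Module.finrank ℝ (EuclideanSpace ℝ (Fin n) × ℝ) = n + 1 := by
    rw [Module.finrank_prod, finrank_euclideanSpace_fin, Module.finrank_self]
  have hnotli : ¬ LinearIndependent ℝ (fun i : {i // i ∈ s} => ((x i.1, (1:ℝ)) : EuclideanSpace ℝ (Fin n) × ℝ)) := by
    intro hli
    have := hli.fintype_card_le_finrank
    rw [hdim, Fintype.card_coe] at this
    omega
  obtain ⟨g₀, hg₀sum, i₀, hg₀i₀⟩ := Fintype.not_linearIndependent_iff.mp hnotli
  have key : ∀ g : {i // i ∈ s} → ℝ,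
      (∑ i, g i • ((x i.1, (1:ℝ)) : EuclideanSpace ℝ (Fin n) × ℝ)) = 0 → (∃ i, 0 < g i) → False := by
    rintro g hg ⟨j₀, hj₀⟩
    have hgx : (∑ i : {i // i ∈ s}, g i • x i.1) = 0 := by
      have := congrArg Prod.fst hg
      simpa [Prod.fst_sum] using this
    have hg1 : (∑ i : {i // i ∈ s}, g i) = 0 := by
      have := congrArg Prod.snd hg
      simpa [Prod.snd_sum] using this
    set t₁ : Finset (Fin N) := s.filter (fun j => ∀ h : j ∈ s, 0 < g ⟨j, h⟩) with ht₁
    set t₂ : Finset (Fin N) := s.filter (fun j => ∀ h : j ∈ s, g ⟨j, h⟩ < 0) with ht₂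
    obtain ⟨c₁, hc₁⟩ := hs t₁ (Finset.filter_subset _ _)
    obtain ⟨c₂, hc₂⟩ := hs t₂ (Finset.filter_subset _ _)
    set ψ : EuclideanSpace ℝ (Fin n) → ℝ :=
      fun y => ‖y - c₂‖^2 - ‖y - c₁‖^2 with hψ
    have hterm : ∀ i : {i // i ∈ s},
        0 ≤ g i * ψ (x i.1) ∧ (g i ≠ 0 → 0 < g i * ψ (x i.1)) := by
      intro i
      have heta : ∀ h : i.1 ∈ s, (⟨i.1, h⟩ : {i // i ∈ s}) = i := fun h => Subtype.ext rfl
      rcases lt_trichotomy (g i) 0 with hlt | heq | hgt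
      · have hmem2 : i.1 ∈ t₂ := Finset.mem_filter.2 ⟨i.2, fun h => by rw [heta h]; exact hlt⟩
        have hnmem1 : i.1 ∉ t₁ := by
          intro hmem
          have h2 := (Finset.mem_filter.1 hmem).2 i.2
          rw [heta i.2] at h2
          linarith
        have hin : ‖x i.1 - c₂‖ < ρ := (hc₂ i.1 i.2).1 hmem2
        have hout : ¬ (‖x i.1 - c₁‖ < ρ) := fun hh => hnmem1 ((hc₁ i.1 i.2).2 hh)
        push_neg at hout
        have hneg : ψ (x i.1) < 0 := by
          show ‖x i.1 - c₂‖^2 - ‖x i.1 - c₁‖^2 < 0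
          nlinarith [norm_nonneg (x i.1 - c₂), norm_nonneg (x i.1 - c₁)]
        exact ⟨le_of_lt (mul_pos_of_neg_of_neg hlt hneg),
          fun _ => mul_pos_of_neg_of_neg hlt hneg⟩
      · exact ⟨by rw [heq, zero_mul], fun h => absurd heq h⟩
      · have hmem1 : i.1 ∈ t₁ := Finset.mem_filter.2 ⟨i.2, fun h => by rw [heta h]; exact hgt⟩
        have hnmem2 : i.1 ∉ t₂ := by
          intro hmem
          have h2 := (Finset.mem_filter.1 hmem).2 i.2
          rw [heta i.2] at h2
          linarith
        have hin : ‖x i.1 - c₁‖ < ρ := (hc₁ i.1 i.2).1 hmem1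
        have hout : ¬ (‖x i.1 - c₂‖ < ρ) := fun hh => hnmem2 ((hc₂ i.1 i.2).2 hh)
        push_neg at hout
        have hpos : 0 < ψ (x i.1) := by
          show 0 < ‖x i.1 - c₂‖^2 - ‖x i.1 - c₁‖^2
          nlinarith [norm_nonneg (x i.1 - c₂), norm_nonneg (x i.1 - c₁)]
        exact ⟨le_of_lt (mul_pos hgt hpos), fun _ => mul_pos hgt hpos⟩
    have hsumpos : 0 < ∑ i : {i // i ∈ s}, g i * ψ (x i.1) :=
      Finset.sum_pos' (fun i _ => (hterm i).1)
        ⟨j₀, Finset.mem_univ _, (hterm j₀).2 (ne_of_gt hj₀)⟩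
    have hsum0 : ∑ i : {i // i ∈ s}, g i * ψ (x i.1) = 0 := by
      have hexp : ∀ i : {i // i ∈ s}, g i * ψ (x i.1)
          = 2 * (inner ℝ (g i • x i.1) (c₁ - c₂) : ℝ) + (‖c₂‖^2 - ‖c₁‖^2) * g i := by
        intro i
        show g i * (‖x i.1 - c₂‖^2 - ‖x i.1 - c₁‖^2)
          = 2 * (inner ℝ (g i • x i.1) (c₁ - c₂) : ℝ) + (‖c₂‖^2 - ‖c₁‖^2) * g i
        rw [real_inner_smul_left, norm_sub_sq_real, norm_sub_sq_real, inner_sub_right]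
        ring
      rw [Finset.sum_congr rfl (fun i _ => hexp i), Finset.sum_add_distrib,
        ← Finset.mul_sum, ← Finset.mul_sum, ← sum_inner, hgx, hg1]
      simp
    rw [hsum0] at hsumpos
    exact lt_irrefl 0 hsumpos
  by_cases hpos : ∃ i, 0 < g₀ i
  · exact key g₀ hg₀sum hpos
  · push_neg at hpos
    apply key (fun i => - g₀ i)
    · simp only [neg_smul, Finset.sum_neg_distrib, hg₀sum, neg_zero]
    · refine ⟨i₀, ?_⟩
      have := hpos i₀
      rcases lt_or_eq_of_le this with h | h
      · linarith
      · exact absurd h hg₀i₀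

private lemma ball_patterns_card {n N : ℕ} (x : Fin N → EuclideanSpace ℝ (Fin n)) (ρ : ℝ)
    (hρ : 0 ≤ ρ) (W : Finset (Fin N → Bool))
    (hW : ∀ v ∈ W, ∃ c : EuclideanSpace ℝ (Fin n), ∀ i, (v i = true ↔ ‖x i - c‖ < ρ)) :
    W.card ≤ ∑ k ∈ Finset.Iic (n+1), N.choose k := by
  classical
  set 𝒜 : Finset (Finset (Fin N)) := W.image (fun v => univ.filter (fun i => v i = true)) with h𝒜
  have hinj : Function.Injective (fun v : Fin N → Bool => univ.filter (fun i => v i = true)) := by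
    intro v v' h
    simp only at h
    funext i
    have h1 := Finset.ext_iff.1 h i
    simp only [Finset.mem_filter, Finset.mem_univ, true_and] at h1
    cases hv : v i <;> cases hv' : v' i <;> simp_all
  have hcard : 𝒜.card = W.card := Finset.card_image_of_injective _ hinj
  have hvc : 𝒜.vcDim ≤ n + 1 := by
    apply Finset.sup_le
    intro s hs
    have hsh : 𝒜.Shatters s := Finset.mem_shatterer.1 hs
    apply balls_no_shatter x ρ hρ
    intro t ht
    obtain ⟨u, hu, hut⟩ := hsh ht
    obtain ⟨v, hv, rfl⟩ := Finset.mem_image.mp hu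
    obtain ⟨c, hc⟩ := hW v hv
    refine ⟨c, fun i hi => ?_⟩
    rw [← hut, Finset.mem_inter, Finset.mem_filter]
    simp [hi, hc i]
  calc W.card = 𝒜.card := hcard.symm
    _ ≤ 𝒜.shatterer.card := Finset.card_le_card_shatterer 𝒜
    _ ≤ ∑ k ∈ Finset.Iic 𝒜.vcDim, (Fintype.card (Fin N)).choose k :=
        Finset.card_shatterer_le_sum_vcDim
    _ ≤ ∑ k ∈ Finset.Iic (n+1), N.choose k := by
        rw [Fintype.card_fin]
        exact Finset.sum_le_sum_of_subset (Finset.Iic_subset_Iic.2 hvc)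

private lemma binom_sum_le (d N : ℕ) (hd : 0 < d) (hdN : d ≤ N) :
    ((∑ k ∈ Finset.Iic d, N.choose k : ℕ) : ℝ) ≤ (Real.exp 1 * N / d)^d := by
  have hN : 0 < N := lt_of_lt_of_le hd hdN
  set X : ℝ := (d:ℝ)/N with hX
  have hX0 : 0 < X := div_pos (by exact_mod_cast hd) (by exact_mod_cast hN)
  have hX1 : X ≤ 1 := by
    rw [hX, div_le_one (by exact_mod_cast hN)]
    exact_mod_cast hdN
  have key : ((∑ k ∈ Finset.Iic d, N.choose k : ℕ) : ℝ) * X^d ≤ Real.exp d := by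
    calc ((∑ k ∈ Finset.Iic d, N.choose k : ℕ) : ℝ) * X^d
        = ∑ k ∈ Finset.Iic d, (N.choose k : ℝ) * X^d := by
          push_cast
          rw [Finset.sum_mul]
      _ ≤ ∑ k ∈ Finset.Iic d, (N.choose k : ℝ) * X^k := by
          apply Finset.sum_le_sum
          intro k hk
          apply mul_le_mul_of_nonneg_left _ (by positivity)
          exact pow_le_pow_of_le_one hX0.le hX1 (Finset.mem_Iic.1 hk)
      _ ≤ ∑ k ∈ Finset.range (N+1), (N.choose k : ℝ) * X^k := by
          apply Finset.sum_le_sum_of_subset_of_nonneg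
          · intro k hk
            rw [Finset.mem_range]
            have := Finset.mem_Iic.1 hk
            omega
          · intro k _ _
            positivity
      _ = (X + 1)^N := by
          rw [add_pow]
          apply Finset.sum_congr rfl
          intro k _
          simp [mul_comm]
      _ ≤ Real.exp X ^ N := by
          apply pow_le_pow_left₀ (by positivity)
          linarith [Real.add_one_le_exp X]
      _ = Real.exp d := by
          rw [← Real.exp_nat_mul, hX]
          congr 1
          field_simp
  have hXd : 0 < X^d := pow_pos hX0 d
  rw [← le_div_iff₀ hXd] at key
  calc ((∑ k ∈ Finset.Iic d, N.choose k : ℕ) : ℝ) ≤ Real.exp d / X^d := key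
    _ = (Real.exp 1 * N / d)^d := by
        rw [← Real.exp_one_pow, ← div_pow]
        congr 1
        rw [hX]
        field_simp

set_option maxHeartbeats 1000000 in
private lemma per_sample (n m H N : ℕ) (hn : 1 ≤ n) (hm : 1 ≤ m) (hH : 1 ≤ H)
    (hN : n + 1 ≤ N) (r : Fin m × Fin H → ℝ) (hr : ∀ ot, 0 ≤ r ot)
    (ω : Fin N → (Fin m × Fin H → EuclideanSpace ℝ (Fin n))) :
    (∑ σ : Fin N → Bool,
        ⨆ q : Fin H → EuclideanSpace ℝ (Fin n),
          (1 / N : ℝ) * ∑ i : Fin N, (if σ i then (1:ℝ) else -1) *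
            (if ∃ ot : Fin m × Fin H, ‖q ot.2 - ω i ot‖ < r ot then (1:ℝ) else 0)) / 2 ^ N
      ≤ m * H * Real.sqrt ((n + 1) * Real.log (Real.exp 1 * N / (n + 1)) / (2 * N)) := by
  classical
  have hN0 : 0 < N := by omega
  have hNR : (0:ℝ) < N := by exact_mod_cast hN0
  -- pattern machinery
  set Ψ : (Fin H → EuclideanSpace ℝ (Fin n)) → (Fin m × Fin H → Fin N → Bool) :=
    fun q => fun ot i => decide (‖q ot.2 - ω i ot‖ < r ot) with hΨ
  set W : Finset (Fin m × Fin H → Fin N → Bool) :=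
    (Set.toFinite (Set.range Ψ)).toFinset with hW
  set orify : (Fin m × Fin H → Fin N → Bool) → (Fin N → Bool) :=
    fun P i => decide (∃ ot, P ot i = true) with horify
  set V : Finset (Fin N → Bool) := W.image orify with hV
  set A : Finset (Fin N → ℝ) := V.image (fun v i => if v i then (1:ℝ) else 0) with hAdef
  have hWne : W.Nonempty := by
    refine ⟨Ψ (fun _ => 0), ?_⟩
    rw [hW, Set.Finite.mem_toFinset]
    exact Set.mem_range_self (f := Ψ) (fun _ => 0)
  have hA : A.Nonempty := (hWne.image _).image _
  have h01 : ∀ a ∈ A, ∀ i, a i = 0 ∨ a i = 1 := by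
    intro a ha i
    obtain ⟨v, _, rfl⟩ := Finset.mem_image.mp ha
    by_cases h : v i <;> simp [h]
  -- step: iSup ≤ sup'
  have hsup : ∀ σ : Fin N → Bool,
      (⨆ q : Fin H → EuclideanSpace ℝ (Fin n),
        (1 / N : ℝ) * ∑ i : Fin N, (if σ i then (1:ℝ) else -1) *
          (if ∃ ot : Fin m × Fin H, ‖q ot.2 - ω i ot‖ < r ot then (1:ℝ) else 0))
      ≤ (1 / N : ℝ) * A.sup' hA (fun a => ∑ i, (if σ i then (1:ℝ) else -1) * a i) := by
    intro σ
    apply ciSup_le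
    intro q
    apply mul_le_mul_of_nonneg_left _ (by positivity)
    have hmem : (fun i => if orify (Ψ q) i then (1:ℝ) else 0) ∈ A := by
      apply Finset.mem_image_of_mem
      apply Finset.mem_image_of_mem
      rw [hW, Set.Finite.mem_toFinset]
      exact Set.mem_range_self (f := Ψ) q
    have heq : ∀ i : Fin N,
        (if ∃ ot : Fin m × Fin H, ‖q ot.2 - ω i ot‖ < r ot then (1:ℝ) else 0)
        = (if orify (Ψ q) i then (1:ℝ) else 0) := by
      intro i
      rw [horify]
      simp only [hΨ, decide_eq_true_eq]
    have hle := Finset.le_sup'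
      (f := fun a : Fin N → ℝ => ∑ i, (if σ i then (1:ℝ) else -1) * a i) hmem
    calc ∑ i : Fin N, (if σ i then (1:ℝ) else -1) *
          (if ∃ ot : Fin m × Fin H, ‖q ot.2 - ω i ot‖ < r ot then (1:ℝ) else 0)
        = ∑ i : Fin N, (if σ i then (1:ℝ) else -1) * (if orify (Ψ q) i then (1:ℝ) else 0) := by
          apply Finset.sum_congr rfl
          intro i _
          rw [heq i]
      _ ≤ A.sup' hA (fun a => ∑ i, (if σ i then (1:ℝ) else -1) * a i) := hle
  -- massart bound
  have hmassart := massart01 hN0 A hA h01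
  -- cardinality bound
  set K : ℕ := ∑ k ∈ Finset.Iic (n+1), N.choose k with hK
  set compMap : (Fin m × Fin H) → (Fin H → EuclideanSpace ℝ (Fin n)) → (Fin N → Bool) :=
    fun ot q => fun i => decide (‖q ot.2 - ω i ot‖ < r ot) with hcompMap
  set comp : (Fin m × Fin H) → Finset (Fin N → Bool) :=
    fun ot => (Set.toFinite (Set.range (compMap ot))).toFinset with hcomp
  have hcardW : W.card ≤ K ^ (m * H) := by
    have hsub : W ⊆ Fintype.piFinset comp := by
      intro P hP
      rw [hW, Set.Finite.mem_toFinset] at hP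
      obtain ⟨q, rfl⟩ := hP
      rw [Fintype.mem_piFinset]
      intro ot
      rw [hcomp]
      rw [Set.Finite.mem_toFinset]
      exact Set.mem_range_self (f := compMap ot) q
    calc W.card ≤ _ := Finset.card_le_card hsub
      _ = ∏ ot : Fin m × Fin H, (comp ot).card := Fintype.card_piFinset _
      _ ≤ ∏ _ot : Fin m × Fin H, K := by
          apply Finset.prod_le_prod'
          intro ot _
          apply ball_patterns_card (fun i => ω i ot) (r ot) (hr ot)
          intro v hv
          rw [hcomp, Set.Finite.mem_toFinset] at hv
          obtain ⟨q, rfl⟩ := hv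
          refine ⟨q ot.2, fun i => ?_⟩
          rw [norm_sub_rev]
          simp [hcompMap]
      _ = K ^ (m * H) := by
          rw [Finset.prod_const, Finset.card_univ, Fintype.card_prod, Fintype.card_fin,
            Fintype.card_fin]
  have hcardA : A.card ≤ K ^ (m * H) :=
    le_trans (Finset.card_image_le.trans Finset.card_image_le) hcardW
  -- log bound
  have hd : (0:ℝ) < (n:ℝ) + 1 := by positivity
  have hEN1 : (1:ℝ) ≤ Real.exp 1 * N / (n+1) := by
    rw [le_div_iff₀ hd]
    have h1 : ((n:ℝ)+1) ≤ N := by exact_mod_cast hN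
    nlinarith [Real.exp_one_gt_d9]
  have hlogpos : (0:ℝ) ≤ Real.log (Real.exp 1 * N / (n+1)) := Real.log_nonneg hEN1
  have hKreal : (K:ℝ) ≤ (Real.exp 1 * N / (n+1))^(n+1) := by
    have := binom_sum_le (n+1) N (by omega) hN
    rw [hK]
    convert this using 3
    push_cast
    ring
  have hcardA0 : (0:ℝ) < A.card := by
    have := Finset.card_pos.2 hA
    exact_mod_cast this
  have hlogA : Real.log A.card ≤ ((n+1) * (m * H)) * Real.log (Real.exp 1 * N / (n+1)) := by
    calc Real.log A.card ≤ Real.log (((Real.exp 1 * N / (n+1))^(n+1))^(m*H)) := by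
          apply Real.log_le_log hcardA0
          calc (A.card : ℝ) ≤ ((K:ℕ):ℝ)^(m*H) := by exact_mod_cast hcardA
            _ ≤ ((Real.exp 1 * N / (n+1))^(n+1))^(m*H) := by
                apply pow_le_pow_left₀ (by positivity) hKreal
      _ = ((n+1) * (m * H)) * Real.log (Real.exp 1 * N / (n+1)) := by
          rw [← pow_mul, Real.log_pow]
          push_cast
          ring
  -- assemble
  have step : (∑ σ : Fin N → Bool,
        ⨆ q : Fin H → EuclideanSpace ℝ (Fin n),
          (1 / N : ℝ) * ∑ i : Fin N, (if σ i then (1:ℝ) else -1) *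
            (if ∃ ot : Fin m × Fin H, ‖q ot.2 - ω i ot‖ < r ot then (1:ℝ) else 0)) / 2 ^ N
      ≤ (1 / N : ℝ) * Real.sqrt ((N : ℝ) * Real.log A.card / 2) := by
    have h2N : (0:ℝ) < 2^N := by positivity
    calc (∑ σ : Fin N → Bool,
          ⨆ q : Fin H → EuclideanSpace ℝ (Fin n),
            (1 / N : ℝ) * ∑ i : Fin N, (if σ i then (1:ℝ) else -1) *
              (if ∃ ot : Fin m × Fin H, ‖q ot.2 - ω i ot‖ < r ot then (1:ℝ) else 0)) / 2 ^ N
        ≤ (∑ σ : Fin N → Bool, (1 / N : ℝ) *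
            A.sup' hA (fun a => ∑ i, (if σ i then (1:ℝ) else -1) * a i)) / 2 ^ N := by
          gcongr
          exact hsup _
      _ = (1 / N : ℝ) * ((∑ σ : Fin N → Bool,
            A.sup' hA (fun a => ∑ i, (if σ i then (1:ℝ) else -1) * a i)) / 2 ^ N) := by
          rw [← Finset.mul_sum]
          ring
      _ ≤ (1 / N : ℝ) * Real.sqrt ((N : ℝ) * Real.log A.card / 2) := by
          apply mul_le_mul_of_nonneg_left hmassart (by positivity)
  refine le_trans step ?_
  -- final arithmetic
  set L : ℝ := Real.log (Real.exp 1 * N / (n+1)) with hL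
  have hsqrt1 : Real.sqrt ((N : ℝ) * Real.log A.card / 2)
      ≤ Real.sqrt ((N : ℝ) * (((n+1) * (m * H)) * L) / 2) := by
    apply Real.sqrt_le_sqrt
    have : (0:ℝ) < N := hNR
    nlinarith [hlogA]
  have hmH1 : (1:ℝ) ≤ (m:ℝ) * H := by
    have h1 : (1:ℝ) ≤ (m:ℝ) := by exact_mod_cast hm
    have h2 : (1:ℝ) ≤ (H:ℝ) := by exact_mod_cast hH
    nlinarith
  have hY : (0:ℝ) ≤ ((n:ℝ)+1) * L / (2 * N) := by positivity
  have hXnn : (0:ℝ) ≤ (N:ℝ) * ((((n:ℝ)+1) * ((m:ℝ) * H)) * L) / 2 := by positivity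
  have hkey : (1 / N : ℝ) * Real.sqrt ((N : ℝ) * ((((n:ℝ)+1) * ((m:ℝ) * H)) * L) / 2)
      = Real.sqrt (((m:ℝ) * H) * (((n:ℝ)+1) * L / (2 * N))) := by
    rw [one_div]
    calc (↑N)⁻¹ * Real.sqrt ((N : ℝ) * ((((n:ℝ)+1) * ((m:ℝ) * H)) * L) / 2)
        = Real.sqrt ((N : ℝ) * ((((n:ℝ)+1) * ((m:ℝ) * H)) * L) / 2) / (N:ℝ) := by ring
      _ = Real.sqrt ((N : ℝ) * ((((n:ℝ)+1) * ((m:ℝ) * H)) * L) / 2) / Real.sqrt ((N:ℝ)^2) := by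
          rw [Real.sqrt_sq hNR.le]
      _ = Real.sqrt (((N : ℝ) * ((((n:ℝ)+1) * ((m:ℝ) * H)) * L) / 2) / (N:ℝ)^2) :=
          (Real.sqrt_div hXnn _).symm
      _ = Real.sqrt (((m:ℝ) * H) * (((n:ℝ)+1) * L / (2 * N))) := by
          congr 1
          field_simp
  have hsqrtmH : Real.sqrt ((m:ℝ) * H) ≤ (m:ℝ) * H := by
    have h1 := Real.sq_sqrt (by positivity : (0:ℝ) ≤ (m:ℝ) * H)
    nlinarith [Real.sqrt_nonneg ((m:ℝ) * H), sq_nonneg (Real.sqrt ((m:ℝ) * H) - 1)]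
  calc (1 / N : ℝ) * Real.sqrt ((N : ℝ) * Real.log A.card / 2)
      ≤ (1 / N : ℝ) * Real.sqrt ((N : ℝ) * ((((n:ℝ)+1) * ((m:ℝ) * H)) * L) / 2) :=
        mul_le_mul_of_nonneg_left hsqrt1 (by positivity)
    _ = Real.sqrt (((m:ℝ) * H) * (((n:ℝ)+1) * L / (2 * N))) := hkey
    _ = Real.sqrt ((m:ℝ) * H) * Real.sqrt (((n:ℝ)+1) * L / (2 * N)) :=
        Real.sqrt_mul (by positivity) _
    _ ≤ (m:ℝ) * H * Real.sqrt (((n:ℝ)+1) * L / (2 * N)) :=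
        mul_le_mul_of_nonneg_right hsqrtmH (Real.sqrt_nonneg _)
    _ = ↑m * ↑H * Real.sqrt ((↑n + 1) * Real.log (Real.exp 1 * ↑N / (↑n + 1)) / (2 * ↑N)) := by
        rw [hL]

theorem stmt_10 (n m H : ℕ) (hn : 1 ≤ n) (hm : 1 ≤ m) (hH : 1 ≤ H)
    (N : ℕ) (hN : n + 1 ≤ N)
    (r : Fin m × Fin H → ℝ) (hr : ∀ ot, 0 ≤ r ot)
    (μ : Measure (Fin m × Fin H → EuclideanSpace ℝ (Fin n))) [IsProbabilityMeasure μ] :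
    (∫ ωs : Fin N → (Fin m × Fin H → EuclideanSpace ℝ (Fin n)),
        (∑ σ : Fin N → Bool,
            ⨆ q : Fin H → EuclideanSpace ℝ (Fin n),
              (1 / N : ℝ) *
                ∑ i : Fin N,
                  (if σ i then (1 : ℝ) else -1) *
                    (if ∃ ot : Fin m × Fin H, ‖q ot.2 - ωs i ot‖ < r ot then (1 : ℝ) else 0)) /
          2 ^ N ∂(Measure.pi fun _ : Fin N => μ)) ≤
      m * H * Real.sqrt ((n + 1) * Real.log (Real.exp 1 * N / (n + 1)) / (2 * N)) := by
  set C : ℝ := m * H * Real.sqrt ((n + 1) * Real.log (Real.exp 1 * N / (n + 1)) / (2 * N)) with hC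
  have hC0 : 0 ≤ C := by
    rw [hC]
    positivity
  set g : (Fin N → (Fin m × Fin H → EuclideanSpace ℝ (Fin n))) → ℝ := fun ωs =>
    (∑ σ : Fin N → Bool,
        ⨆ q : Fin H → EuclideanSpace ℝ (Fin n),
          (1 / N : ℝ) *
            ∑ i : Fin N,
              (if σ i then (1 : ℝ) else -1) *
                (if ∃ ot : Fin m × Fin H, ‖q ot.2 - ωs i ot‖ < r ot then (1 : ℝ) else 0)) /
      2 ^ N with hg
  have hbound : ∀ ωs, g ωs ≤ C := fun ωs => per_sample n m H N hn hm hH hN r hr ωs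
  by_cases hint : Integrable g (Measure.pi fun _ : Fin N => μ)
  · calc (∫ ωs, g ωs ∂(Measure.pi fun _ : Fin N => μ))
        ≤ (∫ _ωs, C ∂(Measure.pi fun _ : Fin N => μ)) :=
          integral_mono hint (integrable_const C) hbound
      _ = C := by
          have : IsProbabilityMeasure (Measure.pi fun _ : Fin N => μ) :=
            MeasureTheory.Measure.pi.instIsProbabilityMeasure (μ := fun _ : Fin N => μ)
          simp [measure_univ]
  · rw [integral_undef hint]
    exact hC0
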